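/- Define the Lie algebra L over GF(2) generated by a, b, c subject to: the ideal generated by c is abelian, [b,c] = 0, and [[u,x],u] = 0 for all x ∈ L and u ∈ {a,b,c}. Then L is not nilpotent; it has basis a, b, [a,b], c·(ab)^n for n ≥ 0, and c·(ab)^n·a for n ≥ 0 (left-normed products), so in particular L is infinite-dimensional. -/

import Mathlib

/-- Iterated right bracketing: `adn x y n = [x, y, y, ..., y]` (`y` repeated `n` times). -/
def adn {L : Type*} [LieRing L] (x y : L) : ℕ → L
  | 0 => x
  | n + 1 => ⁅adn x y n, y⁆

open Finsupp

abbrev Idx := Fin 3 ⊕ ℕ ⊕ ℕ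
abbrev Lc := Idx →₀ ZMod 2

noncomputable def ee (i : Idx) : Lc := Finsupp.single i 1

noncomputable def B0 : Idx → Idx → Lc
  | Sum.inl ⟨0,_⟩, Sum.inl ⟨1,_⟩ => ee (Sum.inl 2)
  | Sum.inl ⟨0,_⟩, Sum.inr (Sum.inl n) => ee (Sum.inr (Sum.inr n))
  | Sum.inl ⟨1,_⟩, Sum.inr (Sum.inr n) => ee (Sum.inr (Sum.inl (n+1)))
  | Sum.inl ⟨2,_⟩, Sum.inr (Sum.inl n) => ee (Sum.inr (Sum.inl (n+1)))
  | Sum.inl ⟨2,_⟩, Sum.inr (Sum.inr n) => ee (Sum.inr (Sum.inr (n+1)))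
  | _, _ => 0

@[simp] lemma B0_0_0 : B0 (Sum.inl 0) (Sum.inl 0) = 0 := rfl
@[simp] lemma B0_0_1 : B0 (Sum.inl 0) (Sum.inl 1) = ee (Sum.inl 2) := rfl
@[simp] lemma B0_0_2 : B0 (Sum.inl 0) (Sum.inl 2) = 0 := rfl
@[simp] lemma B0_0_3 (m : ℕ) : B0 (Sum.inl 0) (Sum.inr (Sum.inl m)) = ee (Sum.inr (Sum.inr m)) := rfl
@[simp] lemma B0_0_4 (m : ℕ) : B0 (Sum.inl 0) (Sum.inr (Sum.inr m)) = 0 := rfl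
@[simp] lemma B0_1_0 : B0 (Sum.inl 1) (Sum.inl 0) = 0 := rfl
@[simp] lemma B0_1_1 : B0 (Sum.inl 1) (Sum.inl 1) = 0 := rfl
@[simp] lemma B0_1_2 : B0 (Sum.inl 1) (Sum.inl 2) = 0 := rfl
@[simp] lemma B0_1_3 (m : ℕ) : B0 (Sum.inl 1) (Sum.inr (Sum.inl m)) = 0 := rfl
@[simp] lemma B0_1_4 (m : ℕ) : B0 (Sum.inl 1) (Sum.inr (Sum.inr m)) = ee (Sum.inr (Sum.inl (m+1))) := rfl
@[simp] lemma B0_2_0 : B0 (Sum.inl 2) (Sum.inl 0) = 0 := rfl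
@[simp] lemma B0_2_1 : B0 (Sum.inl 2) (Sum.inl 1) = 0 := rfl
@[simp] lemma B0_2_2 : B0 (Sum.inl 2) (Sum.inl 2) = 0 := rfl
@[simp] lemma B0_2_3 (m : ℕ) : B0 (Sum.inl 2) (Sum.inr (Sum.inl m)) = ee (Sum.inr (Sum.inl (m+1))) := rfl
@[simp] lemma B0_2_4 (m : ℕ) : B0 (Sum.inl 2) (Sum.inr (Sum.inr m)) = ee (Sum.inr (Sum.inr (m+1))) := rfl
@[simp] lemma B0_3_0 (n : ℕ) : B0 (Sum.inr (Sum.inl n)) (Sum.inl 0) = 0 := rfl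
@[simp] lemma B0_3_1 (n : ℕ) : B0 (Sum.inr (Sum.inl n)) (Sum.inl 1) = 0 := rfl
@[simp] lemma B0_3_2 (n : ℕ) : B0 (Sum.inr (Sum.inl n)) (Sum.inl 2) = 0 := rfl
@[simp] lemma B0_3_3 (n : ℕ) (m : ℕ) : B0 (Sum.inr (Sum.inl n)) (Sum.inr (Sum.inl m)) = 0 := rfl
@[simp] lemma B0_3_4 (n : ℕ) (m : ℕ) : B0 (Sum.inr (Sum.inl n)) (Sum.inr (Sum.inr m)) = 0 := rfl
@[simp] lemma B0_4_0 (n : ℕ) : B0 (Sum.inr (Sum.inr n)) (Sum.inl 0) = 0 := rfl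
@[simp] lemma B0_4_1 (n : ℕ) : B0 (Sum.inr (Sum.inr n)) (Sum.inl 1) = 0 := rfl
@[simp] lemma B0_4_2 (n : ℕ) : B0 (Sum.inr (Sum.inr n)) (Sum.inl 2) = 0 := rfl
@[simp] lemma B0_4_3 (n : ℕ) (m : ℕ) : B0 (Sum.inr (Sum.inr n)) (Sum.inr (Sum.inl m)) = 0 := rfl
@[simp] lemma B0_4_4 (n : ℕ) (m : ℕ) : B0 (Sum.inr (Sum.inr n)) (Sum.inr (Sum.inr m)) = 0 := rfl

noncomputable def B (i j : Idx) : Lc := B0 i j + B0 j i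

noncomputable def br : Lc →ₗ[ZMod 2] Lc →ₗ[ZMod 2] Lc :=
  Finsupp.lift (Lc →ₗ[ZMod 2] Lc) (ZMod 2) Idx
    (fun i => Finsupp.lift Lc (ZMod 2) Idx (B i))

lemma br_ss (i j : Idx) : br (ee i) (ee j) = B i j := by
  simp [br, ee, Finsupp.lift_apply, Finsupp.sum_single_index]

lemma hs1 (x : Lc) : x + x = 0 := by
  rw [← two_smul (ZMod 2), show (2 : ZMod 2) = 0 from rfl, zero_smul]

lemma hs2 (x y : Lc) : x + (x + y) = y := by rw [← add_assoc, hs1, zero_add]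

lemma B_symm (i j : Idx) : B i j = B j i := add_comm _ _

lemma br_symm (x y : Lc) : br x y = br y x := by
  have h : br = br.flip := by
    apply Finsupp.lhom_ext; intro i r
    apply Finsupp.lhom_ext; intro j s
    have hi : (Finsupp.single i r : Lc) = r • ee i := by simp [ee]
    have hj : (Finsupp.single j s : Lc) = s • ee j := by simp [ee]
    simp only [hi, hj, map_smul, LinearMap.smul_apply, LinearMap.flip_apply, br_ss, B_symm,
      smul_comm r s]
  conv_lhs => rw [h]
  rfl



set_option maxHeartbeats 2000000 in
lemma key (i j k : Idx) :
    br (ee i) (B j k) = br (B i j) (ee k) + br (ee j) (B i k) := by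
  rcases i with ⟨fi, hfi⟩ | ni | ni <;> rcases j with ⟨fj, hfj⟩ | nj | nj <;>
      rcases k with ⟨fk, hfk⟩ | nk | nk <;>
    (first | interval_cases fi | skip) <;> (first | interval_cases fj | skip) <;>
    (first | interval_cases fk | skip) <;>
    simp [B, br_ss, map_add, hs1, hs2, add_comm, add_left_comm, add_assoc]

lemma key_e (i j k : Idx) :
    br (ee i) (br (ee j) (ee k)) =
      br (br (ee i) (ee j)) (ee k) + br (ee j) (br (ee i) (ee k)) := by
  rw [br_ss, br_ss, br_ss]; exact key i j k

lemma single_eq_smul (i : Idx) (r : ZMod 2) : (Finsupp.single i r : Lc) = r • ee i := by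
  simp [ee]

lemma jacobi (x y z : Lc) :
    br x (br y z) = br (br x y) z + br y (br x z) := by
  induction x using Finsupp.induction_linear with
  | zero => simp
  | add f g hf hg =>
      simp only [map_add, LinearMap.add_apply, hf, hg]
      abel
  | single i r =>
    induction y using Finsupp.induction_linear with
    | zero => simp
    | add f g hf hg =>
        simp only [map_add, LinearMap.add_apply, hf, hg]
        abel
    | single j s =>
      induction z using Finsupp.induction_linear with
      | zero => simp
      | add f g hf hg =>
          simp only [map_add, LinearMap.add_apply, hf, hg]
          abel
      | single k t =>
        simp only [single_eq_smul, map_smul, LinearMap.smul_apply, smul_smul]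
        rw [key_e i j k, smul_add]
        module

lemma lie_self' (x : Lc) : br x x = 0 := by
  induction x using Finsupp.induction_linear with
  | zero => simp
  | add f g hf hg =>
      have : br (f + g) (f + g) = br f f + (br f g + br g f) + br g g := by
        simp only [map_add, LinearMap.add_apply]; abel
      rw [this, hf, hg, br_symm g f, hs1, add_zero, zero_add]
  | single i r =>
      have : B i i = 0 := hs1 _
      simp only [single_eq_smul, map_smul, LinearMap.smul_apply, br_ss, this, smul_zero]

noncomputable instance lcLieRing : LieRing Lc :=
  { (inferInstance : AddCommGroup Lc) with
    bracket := fun x y => br x y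
    add_lie := fun x y z => by simp [map_add]
    lie_add := fun x y z => by simp [map_add]
    lie_self := lie_self'
    leibniz_lie := jacobi }

lemma lie_def (x y : Lc) : ⁅x, y⁆ = br x y := rfl

noncomputable instance lcLieAlgebra : LieAlgebra (ZMod 2) Lc :=
  ⟨fun t x y => by simp only [lie_def, map_smul, LinearMap.smul_apply]⟩

-- named elements
noncomputable def aa : Lc := ee (Sum.inl 0)
noncomputable def bb : Lc := ee (Sum.inl 1)
noncomputable def cc : Lc := ee (Sum.inr (Sum.inl 0))
noncomputable def mm : Lc := ee (Sum.inl 2)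

lemma lie_ab : ⁅aa, bb⁆ = mm := by
  simp [aa, bb, mm, lie_def, br_ss, B]

lemma lie_c_m (n : ℕ) : ⁅ee (Sum.inr (Sum.inl n)), mm⁆ = ee (Sum.inr (Sum.inl (n+1))) := by
  simp [mm, lie_def, br_ss, B]

lemma lie_c_a (n : ℕ) : ⁅ee (Sum.inr (Sum.inl n)), aa⁆ = ee (Sum.inr (Sum.inr n)) := by
  simp [aa, lie_def, br_ss, B]

lemma adn_c (n : ℕ) : adn cc mm n = ee (Sum.inr (Sum.inl n)) := by
  induction n with
  | zero => rfl
  | succ n ih => rw [adn, ih, lie_c_m]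

lemma sandwich_gen (i : Idx) (h : ∀ j : Idx, br (B i j) (ee i) = 0) (x : Lc) :
    ⁅⁅ee i, x⁆, ee i⁆ = 0 := by
  simp only [lie_def]
  induction x using Finsupp.induction_linear with
  | zero => simp
  | add f g hf hg => simp only [map_add, LinearMap.add_apply, hf, hg, add_zero]
  | single j r =>
      simp only [single_eq_smul, map_smul, LinearMap.smul_apply, br_ss, h j, smul_zero]

lemma sandwich_a (x : Lc) : ⁅⁅aa, x⁆, aa⁆ = 0 := by
  refine sandwich_gen _ (fun j => ?_) x
  rcases j with ⟨fj, hfj⟩ | n | n <;> (first | interval_cases fj | skip) <;>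
    simp [B, br_ss, map_add, hs1]

lemma sandwich_b (x : Lc) : ⁅⁅bb, x⁆, bb⁆ = 0 := by
  refine sandwich_gen _ (fun j => ?_) x
  rcases j with ⟨fj, hfj⟩ | n | n <;> (first | interval_cases fj | skip) <;>
    simp [B, br_ss, map_add, hs1]

lemma sandwich_c (x : Lc) : ⁅⁅cc, x⁆, cc⁆ = 0 := by
  refine sandwich_gen _ (fun j => ?_) x
  rcases j with ⟨fj, hfj⟩ | n | n <;> (first | interval_cases fj | skip) <;>
    simp [B, br_ss, map_add, hs1]

lemma gen_top : LieSubalgebra.lieSpan (ZMod 2) Lc {aa, bb, cc} = ⊤ := by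
  set S := LieSubalgebra.lieSpan (ZMod 2) Lc {aa, bb, cc} with hS
  have ha : aa ∈ S := LieSubalgebra.subset_lieSpan (by simp)
  have hb : bb ∈ S := LieSubalgebra.subset_lieSpan (by simp)
  have hc : cc ∈ S := LieSubalgebra.subset_lieSpan (by simp)
  have hm : mm ∈ S := by rw [← lie_ab]; exact S.lie_mem ha hb
  have hcn : ∀ n, ee (Sum.inr (Sum.inl n)) ∈ S := by
    intro n
    induction n with
    | zero => exact hc
    | succ n ih => rw [← lie_c_m]; exact S.lie_mem ih hm
  have hdn : ∀ n, ee (Sum.inr (Sum.inr n)) ∈ S := by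
    intro n; rw [← lie_c_a]; exact S.lie_mem (hcn n) ha
  have he : ∀ i, ee i ∈ S := by
    intro i
    rcases i with ⟨f, hf⟩ | n | n
    · interval_cases f
      · exact ha
      · exact hb
      · exact hm
    · exact hcn n
    · exact hdn n
  have hall : ∀ x : Lc, x ∈ S := by
    intro x
    induction x using Finsupp.induction_linear with
    | zero => exact S.zero_mem
    | add f g hf hg => exact S.add_mem hf hg
    | single i r => rw [single_eq_smul]; exact S.smul_mem r (he i)
  rw [eq_top_iff]
  exact fun x _ => hall x

noncomputable def CC : Submodule (ZMod 2) Lc :=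
  Submodule.span (ZMod 2) (Set.range fun p : ℕ ⊕ ℕ => ee (Sum.inr p))

lemma mem_CC (p : ℕ ⊕ ℕ) : ee (Sum.inr p) ∈ CC :=
  Submodule.subset_span ⟨p, rfl⟩

lemma B_mem_CC (i : Idx) (p : ℕ ⊕ ℕ) : B i (Sum.inr p) ∈ CC := by
  rcases i with ⟨fi, hfi⟩ | n | n <;> rcases p with m | m <;>
      (first | interval_cases fi | skip) <;>
    simp only [B, B0, add_zero, zero_add] <;>
    first
      | exact CC.zero_mem
      | exact mem_CC _

lemma br_mem_CC (y : Lc) (hy : y ∈ CC) (x : Lc) : br x y ∈ CC := by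
  induction hy using Submodule.span_induction with
  | mem z hz =>
      obtain ⟨p, rfl⟩ := hz
      induction x using Finsupp.induction_linear with
      | zero => simp only [map_zero, LinearMap.zero_apply]; exact CC.zero_mem
      | add f g hf hg =>
          simp only [map_add, LinearMap.add_apply]; exact CC.add_mem hf hg
      | single i r =>
          rw [single_eq_smul, map_smul, LinearMap.smul_apply, br_ss]
          exact CC.smul_mem r (B_mem_CC i p)
  | zero => simp only [map_zero]; exact CC.zero_mem
  | add y z _ _ hy hz => rw [map_add]; exact CC.add_mem hy hz
  | smul t y _ hy => rw [map_smul]; exact CC.smul_mem t hy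

lemma CC_abelian : ∀ x ∈ CC, ∀ y ∈ CC, br x y = 0 := by
  intro x hx
  induction hx using Submodule.span_induction with
  | mem z hz =>
      obtain ⟨p, rfl⟩ := hz
      intro y hy
      induction hy using Submodule.span_induction with
      | mem w hw =>
          obtain ⟨q, rfl⟩ := hw
          rcases p with m | m <;> rcases q with k | k <;> simp [br_ss, B]
      | zero => simp
      | add y z _ _ hy hz => rw [map_add, hy, hz, add_zero]
      | smul t y _ hy => rw [map_smul, hy, smul_zero]
  | zero => intro y hy; simp
  | add u v _ _ hu hv =>
      intro y hy
      rw [map_add, LinearMap.add_apply, hu y hy, hv y hy, add_zero]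
  | smul t u _ hu =>
      intro y hy
      rw [map_smul, LinearMap.smul_apply, hu y hy, smul_zero]

noncomputable def CI : LieSubmodule (ZMod 2) Lc Lc :=
  { CC with lie_mem := fun {x m} hm => br_mem_CC m hm x }

lemma ideal_c_le : LieSubmodule.lieSpan (ZMod 2) Lc ({cc} : Set Lc) ≤ CI := by
  rw [LieSubmodule.lieSpan_le]
  intro z hz
  rw [Set.mem_singleton_iff] at hz
  subst hz
  exact mem_CC (Sum.inl 0)

lemma c_in_lcs (k : ℕ) :
    ee (Sum.inr (Sum.inl k)) ∈ LieModule.lowerCentralSeries (ZMod 2) Lc Lc k := by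
  induction k with
  | zero => trivial
  | succ k ih =>
      rw [LieModule.lowerCentralSeries_succ]
      have h : ee (Sum.inr (Sum.inl (k+1))) = ⁅mm, ee (Sum.inr (Sum.inl k))⁆ := by
        rw [lie_def, br_symm, ← lie_def, lie_c_m]
      rw [h]
      exact LieSubmodule.lie_mem_lie (LieSubmodule.mem_top mm) ih

/-- The Example of Section 1.2: there is a Lie algebra `L` over `GF(2)` generated by
`a, b, c` with the ideal generated by `c` abelian, `[b,c] = 0` and each of `a, b, c`
satisfying the first sandwich condition, such that `a`, `b`, `[a,b]`, `c(ab)ⁿ` (n ≥ 0)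
and `c(ab)ⁿa` (n ≥ 0) form a basis of `L`; in particular `L` is infinite-dimensional
and not nilpotent. -/
theorem stmt16 :
    ∃ (L : Type) (_ : LieRing L) (_ : LieAlgebra (ZMod 2) L) (a b c : L),
      LieSubalgebra.lieSpan (ZMod 2) L {a, b, c} = ⊤ ∧
      (∀ x ∈ LieSubmodule.lieSpan (ZMod 2) L ({c} : Set L),
        ∀ y ∈ LieSubmodule.lieSpan (ZMod 2) L ({c} : Set L), ⁅x, y⁆ = 0) ∧
      ⁅b, c⁆ = 0 ∧
      (∀ x : L, ⁅⁅a, x⁆, a⁆ = 0) ∧ (∀ x : L, ⁅⁅b, x⁆, b⁆ = 0) ∧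
      (∀ x : L, ⁅⁅c, x⁆, c⁆ = 0) ∧
      (∃ F : Fin 3 ⊕ ℕ ⊕ ℕ → L,
        F (Sum.inl 0) = a ∧ F (Sum.inl 1) = b ∧ F (Sum.inl 2) = ⁅a, b⁆ ∧
        (∀ n : ℕ, F (Sum.inr (Sum.inl n)) = adn c ⁅a, b⁆ n) ∧
        (∀ n : ℕ, F (Sum.inr (Sum.inr n)) = ⁅adn c ⁅a, b⁆ n, a⁆) ∧
        LinearIndependent (ZMod 2) F ∧
        Submodule.span (ZMod 2) (Set.range F) = ⊤) ∧
      ¬ Module.Finite (ZMod 2) L ∧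
      ¬ LieRing.IsNilpotent L := by
  have hF : ee = ⇑(Finsupp.basisSingleOne : Module.Basis Idx (ZMod 2) Lc) := by
    funext i; simp [ee]
  refine ⟨Lc, inferInstance, inferInstance, aa, bb, cc, gen_top, ?_, ?_,
    sandwich_a, sandwich_b, sandwich_c, ?_, ?_, ?_⟩
  · intro x hx y hy
    rw [lie_def]
    exact CC_abelian x (ideal_c_le hx) y (ideal_c_le hy)
  · simp [bb, cc, lie_def, br_ss, B]
  · refine ⟨ee, rfl, rfl, lie_ab.symm, ?_, ?_, ?_, ?_⟩
    · intro n; rw [lie_ab]; exact (adn_c n).symm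
    · intro n; rw [lie_ab, adn_c, lie_c_a]
    · rw [hF]; exact Module.Basis.linearIndependent _
    · rw [hF]; exact Module.Basis.span_eq _
  · intro h
    have : Finite Idx :=
      Module.Finite.finite_basis (Finsupp.basisSingleOne : Module.Basis Idx (ZMod 2) Lc)
    exact not_finite Idx
  · intro h
    obtain ⟨k, hk⟩ := LieModule.IsNilpotent.nilpotent (ZMod 2) Lc Lc
    have hc := c_in_lcs k
    rw [hk, LieSubmodule.mem_bot] at hc
    simp only [ee] at hc
    exact one_ne_zero (Finsupp.single_eq_zero.mp hc)
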